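/- Let α₁, α₂, α₃ > 0 satisfy 1/α₁ = 1/α₂ + 1/α₃, define a₁ = −α₁^{−1/2}(α₂α₃)^{1/2}, a₂ = α₂^{−1/2}(α₃α₁)^{1/2}, a₃ = α₃^{−1/2}(α₁α₂)^{1/2}, let λ > 0 satisfy λ² = a₁² − a₂a₃, let M be the 6×6 real matrix with rows (−2a₁, 0, 0, 0, −√α₃, −√α₂), (0, −2a₂, 0, √α₃, 0, √α₁), (0, 0, −2a₃, √α₂, √α₁, 0), (0, √α₃, √α₂, 2a₁, 0, 0), (−√α₃, 0, −√α₁, 0, 2a₂, 0), (−√α₂, −√α₁, 0, 0, 0, 2a₃), and let (b₁,b₂,b₃), (c₁,c₂,c₃), (d₁,d₂,d₃), (e₁,e₂,e₃), (f₁,f₂,f₃) ∈ ℝ³ satisfy M(b₁,b₂,b₃,−b₁,−b₂,−b₃)ᵀ = (√α₁,√α₂,√α₃,√α₁,√α₂,√α₃)ᵀ, M(c₁,c₂,c₃,d₁,d₂,d₃)ᵀ = λ(c₁,c₂,c₃,d₁,d₂,d₃)ᵀ and M(e₁,e₂,e₃,f₁,f₂,f₃)ᵀ = 3λ(e₁,e₂,e₃,f₁,f₂,f₃)ᵀ.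 Then the following identities hold: √α₁c₁ − √α₂c₂ − √α₃c₃ − √α₁d₁ + √α₂d₂ + √α₃d₃ = 0; √α₁e₁ − √α₂e₂ − √α₃e₃ − √α₁f₁ + √α₂f₂ + √α₃f₃ = 0; b₁c₁ − b₂c₂ − b₃c₃ + b₁d₁ − b₂d₂ − b₃d₃ = 0; b₁e₁ − b₂e₂ − b₃e₃ + b₁f₁ − b₂f₂ − b₃f₃ = 0; c₁e₁ − c₂e₂ − c₃e₃ − d₁f₁ + d₂f₂ + d₃f₃ = 0; c₁f₁ − c₂f₂ − c₃f₃ − d₁e₁ + d₂e₂ + d₃e₃ = 0. Furthermore, none of λ, −λ, 3λ, −3λ is equal to a₁, a₂ or a₃. -/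

import Mathlib

noncomputable section

/-- The 6×6 matrix M of Proposition 11.2. -/
def M6 (α₁ α₂ α₃ a₁ a₂ a₃ : ℝ) : Matrix (Fin 6) (Fin 6) ℝ :=
  !![-(2*a₁), 0, 0, 0, -Real.sqrt α₃, -Real.sqrt α₂;
     0, -(2*a₂), 0, Real.sqrt α₃, 0, Real.sqrt α₁;
     0, 0, -(2*a₃), Real.sqrt α₂, Real.sqrt α₁, 0;
     0, Real.sqrt α₃, Real.sqrt α₂, 2*a₁, 0, 0;
     -Real.sqrt α₃, 0, -Real.sqrt α₁, 0, 2*a₂, 0;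
     -Real.sqrt α₂, -Real.sqrt α₁, 0, 0, 0, 2*a₃]

@[simp] lemma cons_val_five' {α : Type*} {m : ℕ} (x : α) (u : Fin (m+5) → α) :
    Matrix.vecCons x u 5
      = Matrix.vecHead (Matrix.vecTail (Matrix.vecTail (Matrix.vecTail (Matrix.vecTail u)))) :=
  rfl

set_option maxHeartbeats 2000000 in
theorem statement_16
    (α₁ α₂ α₃ : ℝ) (hα₁ : 0 < α₁) (hα₂ : 0 < α₂) (hα₃ : 0 < α₃)
    (hsum : 1/α₁ = 1/α₂ + 1/α₃)
    (a₁ a₂ a₃ : ℝ)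
    (ha₁ : a₁ = -(Real.sqrt (α₂ * α₃) / Real.sqrt α₁))
    (ha₂ : a₂ = Real.sqrt (α₃ * α₁) / Real.sqrt α₂)
    (ha₃ : a₃ = Real.sqrt (α₁ * α₂) / Real.sqrt α₃)
    (lam : ℝ) (hlam : 0 < lam) (hlam2 : lam^2 = a₁^2 - a₂*a₃)
    (b c d e f : Fin 3 → ℝ)
    (hb : (M6 α₁ α₂ α₃ a₁ a₂ a₃).mulVec
        ![b 0, b 1, b 2, -(b 0), -(b 1), -(b 2)]
        = ![Real.sqrt α₁, Real.sqrt α₂, Real.sqrt α₃,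
            Real.sqrt α₁, Real.sqrt α₂, Real.sqrt α₃])
    (hcd : (M6 α₁ α₂ α₃ a₁ a₂ a₃).mulVec ![c 0, c 1, c 2, d 0, d 1, d 2]
        = lam • ![c 0, c 1, c 2, d 0, d 1, d 2])
    (hef : (M6 α₁ α₂ α₃ a₁ a₂ a₃).mulVec ![e 0, e 1, e 2, f 0, f 1, f 2]
        = (3 * lam) • ![e 0, e 1, e 2, f 0, f 1, f 2]) :
    (Real.sqrt α₁ * c 0 - Real.sqrt α₂ * c 1 - Real.sqrt α₃ * c 2
      - Real.sqrt α₁ * d 0 + Real.sqrt α₂ * d 1 + Real.sqrt α₃ * d 2 = 0) ∧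
    (Real.sqrt α₁ * e 0 - Real.sqrt α₂ * e 1 - Real.sqrt α₃ * e 2
      - Real.sqrt α₁ * f 0 + Real.sqrt α₂ * f 1 + Real.sqrt α₃ * f 2 = 0) ∧
    (b 0 * c 0 - b 1 * c 1 - b 2 * c 2 + b 0 * d 0 - b 1 * d 1 - b 2 * d 2 = 0) ∧
    (b 0 * e 0 - b 1 * e 1 - b 2 * e 2 + b 0 * f 0 - b 1 * f 1 - b 2 * f 2 = 0) ∧
    (c 0 * e 0 - c 1 * e 1 - c 2 * e 2 - d 0 * f 0 + d 1 * f 1 + d 2 * f 2 = 0) ∧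
    (c 0 * f 0 - c 1 * f 1 - c 2 * f 2 - d 0 * e 0 + d 1 * e 1 + d 2 * e 2 = 0) ∧
    (∀ μ ∈ ({lam, -lam, 3 * lam, -(3 * lam)} : Set ℝ),
      μ ≠ a₁ ∧ μ ≠ a₂ ∧ μ ≠ a₃) := by
  have s1pos : 0 < Real.sqrt α₁ := Real.sqrt_pos.mpr hα₁
  have s2pos : 0 < Real.sqrt α₂ := Real.sqrt_pos.mpr hα₂
  have s3pos : 0 < Real.sqrt α₃ := Real.sqrt_pos.mpr hα₃
  have s1ne : Real.sqrt α₁ ≠ 0 := s1pos.ne'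
  have s2ne : Real.sqrt α₂ ≠ 0 := s2pos.ne'
  have s3ne : Real.sqrt α₃ ≠ 0 := s3pos.ne'
  have sq1 : Real.sqrt α₁ ^ 2 = α₁ := Real.sq_sqrt hα₁.le
  have sq2 : Real.sqrt α₂ ^ 2 = α₂ := Real.sq_sqrt hα₂.le
  have sq3 : Real.sqrt α₃ ^ 2 = α₃ := Real.sq_sqrt hα₃.le
  have r1 : Real.sqrt α₁ * a₁ = -(Real.sqrt α₂ * Real.sqrt α₃) := by
    rw [ha₁, Real.sqrt_mul hα₂.le]; field_simp
  have r2 : Real.sqrt α₂ * a₂ = Real.sqrt α₃ * Real.sqrt α₁ := by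
    rw [ha₂, Real.sqrt_mul hα₃.le]; field_simp
  have r3 : Real.sqrt α₃ * a₃ = Real.sqrt α₁ * Real.sqrt α₂ := by
    rw [ha₃, Real.sqrt_mul hα₁.le]; field_simp
  have hp : α₂*α₃ = α₁*α₃ + α₁*α₂ := by
    field_simp at hsum; linarith only [hsum]
  have q1 : a₂ * a₃ = α₁ := by
    have h : (Real.sqrt α₂ * Real.sqrt α₃) * (a₂*a₃) = (Real.sqrt α₂ * Real.sqrt α₃) * α₁ := by
      linear_combination (Real.sqrt α₃*a₃)*r2 + (Real.sqrt α₁*Real.sqrt α₃)*r3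
        + (Real.sqrt α₂*Real.sqrt α₃)*sq1
    exact mul_left_cancel₀ (by positivity) h
  have q2 : α₁ * a₁^2 = α₂ * α₃ := by
    linear_combination (-(a₁^2))*sq1 + (Real.sqrt α₁*a₁ - Real.sqrt α₂*Real.sqrt α₃)*r1
      + (Real.sqrt α₃)^2*sq2 + α₂*sq3
  have q3 : α₂ * a₂^2 = α₃ * α₁ := by
    linear_combination (-(a₂^2))*sq2 + (Real.sqrt α₂*a₂ + Real.sqrt α₃*Real.sqrt α₁)*r2
      + (Real.sqrt α₁)^2*sq3 + α₃*sq1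
  have q4 : α₃ * a₃^2 = α₁ * α₂ := by
    linear_combination (-(a₃^2))*sq3 + (Real.sqrt α₃*a₃ + Real.sqrt α₁*Real.sqrt α₂)*r3
      + (Real.sqrt α₂)^2*sq1 + α₁*sq2
  have la : a₁^2 = α₂ + α₃ := by
    have h : α₁ * a₁^2 = α₁ * (α₂ + α₃) := by linear_combination q2 + hp
    exact mul_left_cancel₀ hα₁.ne' h
  have l1 : lam^2 = a₁^2 - α₁ := by linear_combination hlam2 - q1
  have l2 : lam^2 = a₂^2 + α₂ := by
    have h : (α₁*α₂) * lam^2 = (α₁*α₂) * (a₂^2 + α₂) := by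
      linear_combination (α₁*α₂)*hlam2 + α₂*q2 - α₁*q3 - (α₁*α₂)*q1 + (α₁+α₂)*hp
    exact mul_left_cancel₀ (by positivity) h
  have l3 : lam^2 = a₃^2 + α₃ := by
    have h : (α₁*α₃) * lam^2 = (α₁*α₃) * (a₃^2 + α₃) := by
      linear_combination (α₁*α₃)*hlam2 + α₃*q2 - α₁*q4 - (α₁*α₃)*q1 + (α₁+α₃)*hp
    exact mul_left_cancel₀ (by positivity) h
  -- extract scalar equations
  have hb0 := congrFun hb 0
  have hb1 := congrFun hb 1
  have hb2 := congrFun hb 2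
  have hc0 := congrFun hcd 0
  have hc1 := congrFun hcd 1
  have hc2 := congrFun hcd 2
  have hc3 := congrFun hcd 3
  have hc4 := congrFun hcd 4
  have hc5 := congrFun hcd 5
  have he0 := congrFun hef 0
  have he1 := congrFun hef 1
  have he2 := congrFun hef 2
  have he3 := congrFun hef 3
  have he4 := congrFun hef 4
  have he5 := congrFun hef 5
  simp [M6, Matrix.mulVec, dotProduct, Fin.sum_univ_six]
    at hb0 hb1 hb2 hc0 hc1 hc2 hc3 hc4 hc5 he0 he1 he2 he3 he4 he5
  -- claim 1
  have k1 : Real.sqrt α₁ * c 0 - Real.sqrt α₂ * c 1 - Real.sqrt α₃ * c 2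
      - Real.sqrt α₁ * d 0 + Real.sqrt α₂ * d 1 + Real.sqrt α₃ * d 2 = 0 := by
    have h : lam * (Real.sqrt α₁ * c 0 - Real.sqrt α₂ * c 1 - Real.sqrt α₃ * c 2
        - Real.sqrt α₁ * d 0 + Real.sqrt α₂ * d 1 + Real.sqrt α₃ * d 2) = 0 := by
      linear_combination (-(2*(c 0 + d 0)))*r1 + (2*(c 1 + d 1))*r2 + (2*(c 2 + d 2))*r3
        - Real.sqrt α₁*hc0 + Real.sqrt α₂*hc1 + Real.sqrt α₃*hc2
        + Real.sqrt α₁*hc3 - Real.sqrt α₂*hc4 - Real.sqrt α₃*hc5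
    exact (mul_eq_zero.mp h).resolve_left hlam.ne'
  have k2 : Real.sqrt α₁ * e 0 - Real.sqrt α₂ * e 1 - Real.sqrt α₃ * e 2
      - Real.sqrt α₁ * f 0 + Real.sqrt α₂ * f 1 + Real.sqrt α₃ * f 2 = 0 := by
    have h : (3*lam) * (Real.sqrt α₁ * e 0 - Real.sqrt α₂ * e 1 - Real.sqrt α₃ * e 2
        - Real.sqrt α₁ * f 0 + Real.sqrt α₂ * f 1 + Real.sqrt α₃ * f 2) = 0 := by
      linear_combination (-(2*(e 0 + f 0)))*r1 + (2*(e 1 + f 1))*r2 + (2*(e 2 + f 2))*r3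
        - Real.sqrt α₁*he0 + Real.sqrt α₂*he1 + Real.sqrt α₃*he2
        + Real.sqrt α₁*he3 - Real.sqrt α₂*he4 - Real.sqrt α₃*he5
    exact (mul_eq_zero.mp h).resolve_left (by positivity)
  have k3 : b 0 * c 0 - b 1 * c 1 - b 2 * c 2 + b 0 * d 0 - b 1 * d 1 - b 2 * d 2 = 0 := by
    have h : lam * (b 0 * c 0 - b 1 * c 1 - b 2 * c 2 + b 0 * d 0 - b 1 * d 1 - b 2 * d 2) = 0 := by
      linear_combination (-(b 0))*hc0 + (b 1)*hc1 + (b 2)*hc2 - (b 0)*hc3 + (b 1)*hc4 + (b 2)*hc5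
        + (c 0 - d 0)*hb0 + (d 1 - c 1)*hb1 + (d 2 - c 2)*hb2 + k1
    exact (mul_eq_zero.mp h).resolve_left hlam.ne'
  have k4 : b 0 * e 0 - b 1 * e 1 - b 2 * e 2 + b 0 * f 0 - b 1 * f 1 - b 2 * f 2 = 0 := by
    have h : (3*lam) * (b 0 * e 0 - b 1 * e 1 - b 2 * e 2
        + b 0 * f 0 - b 1 * f 1 - b 2 * f 2) = 0 := by
      linear_combination (-(b 0))*he0 + (b 1)*he1 + (b 2)*he2 - (b 0)*he3 + (b 1)*he4 + (b 2)*he5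
        + (e 0 - f 0)*hb0 + (f 1 - e 1)*hb1 + (f 2 - e 2)*hb2 + k2
    exact (mul_eq_zero.mp h).resolve_left (by positivity)
  have k5 : c 0 * e 0 - c 1 * e 1 - c 2 * e 2 - d 0 * f 0 + d 1 * f 1 + d 2 * f 2 = 0 := by
    have h : (2*lam) * (c 0 * e 0 - c 1 * e 1 - c 2 * e 2
        - d 0 * f 0 + d 1 * f 1 + d 2 * f 2) = 0 := by
      linear_combination (e 0)*hc0 - (e 1)*hc1 - (e 2)*hc2 - (f 0)*hc3 + (f 1)*hc4 + (f 2)*hc5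
        - (c 0)*he0 + (c 1)*he1 + (c 2)*he2 + (d 0)*he3 - (d 1)*he4 - (d 2)*he5
    exact (mul_eq_zero.mp h).resolve_left (by positivity)
  have k6 : c 0 * f 0 - c 1 * f 1 - c 2 * f 2 - d 0 * e 0 + d 1 * e 1 + d 2 * e 2 = 0 := by
    have h : (4*lam) * (c 0 * f 0 - c 1 * f 1 - c 2 * f 2
        - d 0 * e 0 + d 1 * e 1 + d 2 * e 2) = 0 := by
      linear_combination (d 0)*he0 - (d 1)*he1 - (d 2)*he2 - (c 0)*he3 + (c 1)*he4 + (c 2)*he5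
        - (f 0)*hc0 + (f 1)*hc1 + (f 2)*hc2 + (e 0)*hc3 - (e 1)*hc4 - (e 2)*hc5
    exact (mul_eq_zero.mp h).resolve_left (by positivity)
  refine ⟨k1, k2, k3, k4, k5, k6, ?_⟩
  have hq : α₁*(α₂+α₃) = α₂*α₃ := by linarith only [hp]
  have A1 : lam^2 < a₁^2 := by linarith only [l1, hα₁]
  have A2 : a₂^2 < lam^2 := by linarith only [l2, hα₂]
  have A3 : a₃^2 < lam^2 := by linarith only [l3, hα₃]
  have A4 : a₁^2 < 9*lam^2 := by
    nlinarith only [sq_nonneg (α₂ - α₃), mul_pos hα₂ hα₃, add_pos hα₂ hα₃, hq, l1, la, hα₁, hα₂, hα₃]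
  have lampos : 0 < lam^2 := by positivity
  have A5 : a₂^2 < 9*lam^2 := by linarith only [A2, lampos]
  have A6 : a₃^2 < 9*lam^2 := by linarith only [A3, lampos]
  intro μ hμ
  simp only [Set.mem_insert_iff, Set.mem_singleton_iff] at hμ
  rcases hμ with rfl | rfl | rfl | rfl <;>
    refine ⟨fun h => ?_, fun h => ?_, fun h => ?_⟩ <;> nlinarith only [A1, A2, A3, A4, A5, A6, h, hlam]
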